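/- Let 1/4 < α < 1/3 and R_+, R_- > √3. There exist constants c > 0 and t_0 > 0 such that for all t ≥ t_0: Re G(ξ) < -c·t^{1-3α} for every ξ ∈ Γ_+ with |ξ - i| ≥ t^{-α}, and Re H(ζ) > c·t^{1-3α} for every ζ ∈ Γ_- with |ζ + i| ≥ t^{-α}. (Quantitative part of Lemma 6.1.) -/

import Mathlib

open scoped Real BigOperators

/-- `Re G(ξ)` for the spectral function `G(ξ) = -2t log ξ - it(ξ + ξ⁻¹)` (i.e. `x = -2t`). -/
noncomputable def ReG (t : ℝ) (ξ : ℂ) : ℝ :=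
  -2 * t * Real.log (‖ξ‖) + t * (ξ + ξ⁻¹).im

/-- `Re H(ζ)` for the spectral function `H(ζ) = 2t log ζ - it(ζ + ζ⁻¹)` (i.e. `x = -2t`). -/
noncomputable def ReH (t : ℝ) (ζ : ℂ) : ℝ :=
  2 * t * Real.log (‖ζ‖) + t * (ζ + ζ⁻¹).im

/-- The steep descent contour `Γ₊` built with radius `R`. -/
def GammaPlus (R : ℝ) : Set ℂ :=
  ({z | ∃ x : ℝ, 0 ≤ x ∧ z = Complex.I + (x : ℂ) * Complex.exp (Complex.I * ((Real.pi : ℂ) / 6))}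
      ∩ Metric.closedBall Complex.I 1) ∪
  ({z | ∃ x : ℝ, 0 ≤ x ∧ z = Complex.I + (x : ℂ) * Complex.exp (Complex.I * (5 * (Real.pi : ℂ) / 6))}
      ∩ Metric.closedBall Complex.I 1) ∪
  (({z | ∃ x : ℝ, 0 ≤ x ∧ z = Complex.I + Complex.exp (Complex.I * ((Real.pi : ℂ) / 6)) + (x : ℂ)}
      \ Metric.ball Complex.I 1) ∩ Metric.closedBall 0 R) ∪
  (({z | ∃ x : ℝ, 0 ≤ x ∧ z = Complex.I + Complex.exp (Complex.I * (5 * (Real.pi : ℂ) / 6)) - (x : ℂ)}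
      \ Metric.ball Complex.I 1) ∩ Metric.closedBall 0 R) ∪
  {z | ‖z‖ = R ∧ z.im ≤ 3 / 2}

/-- The steep descent contour `Γ₋` built with radius `R`: the mirror image of `Γ₊`
across the real axis. -/
def GammaMinus (R : ℝ) : Set ℂ :=
  (fun z => (starRingEnd ℂ) z) '' GammaPlus R

/-! ### Auxiliary lemmas -/

lemma pade_log {y : ℝ} (hy : 1 ≤ y) : 3*(y^2-1)/(y^2+4*y+1) ≤ Real.log y := by
  set f : ℝ → ℝ := fun z => Real.log z - 3*(z^2-1)/(z^2+4*z+1) with hf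
  have hden : ∀ z : ℝ, 0 < z → (0:ℝ) < z^2+4*z+1 := by intro z hz; nlinarith
  have hderiv : ∀ z : ℝ, 0 < z →
      HasDerivAt f ((z-1)^4/(z*(z^2+4*z+1)^2)) z := by
    intro z hz
    have h1 : HasDerivAt (fun z : ℝ => 3*(z^2-1)) (3*(2*z)) z := by
      simpa using (((hasDerivAt_pow 2 z).sub_const 1).const_mul 3)
    have h2 : HasDerivAt (fun z : ℝ => z^2+4*z+1) (2*z+4) z := by
      simpa using (((hasDerivAt_pow 2 z).add ((hasDerivAt_id z).const_mul 4)).add_const 1)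
    have h4 := (Real.hasDerivAt_log hz.ne').sub
      (h1.div h2 (by have := hden z hz; positivity))
    refine h4.congr_deriv ?_
    have hd := (hden z hz).ne'
    field_simp
    ring
  have hmono : MonotoneOn f (Set.Ici (1:ℝ)) := by
    apply monotoneOn_of_deriv_nonneg (convex_Ici 1)
    · apply ContinuousOn.sub
      · exact Real.continuousOn_log.mono (by intro z hz; simp at hz ⊢; linarith)
      · apply ContinuousOn.div (by fun_prop) (by fun_prop)
        intro z hz
        simp only [Set.mem_Ici] at hz
        have := hden z (by linarith); positivity
    · intro z hz
      rw [interior_Ici] at hz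
      exact (hderiv z (by simp at hz; linarith)).differentiableAt.differentiableWithinAt
    · intro z hz
      rw [interior_Ici] at hz
      simp only [Set.mem_Ioi] at hz
      rw [(hderiv z (by linarith)).deriv]
      positivity
  have h0 : f 1 ≤ f y := hmono (by simp) (by simpa using hy) hy
  have : f 1 = 0 := by simp [hf]
  rw [this] at h0
  simp only [hf] at h0
  linarith

lemma fbound_ray {x : ℝ} (h0 : 0 ≤ x) (h1 : x ≤ 1) :
    -Real.log (1+x+x^2) + ((1+x/2) - (1+x/2)/(1+x+x^2)) ≤ -x^3/44 := by
  set y : ℝ := 1+x+x^2 with hy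
  have hy1 : (1:ℝ) ≤ y := by nlinarith
  have hy0 : (0:ℝ) < y := by linarith
  have hden : (0:ℝ) < y^2+4*y+1 := by nlinarith
  have hlog := pade_log hy1
  have key : -(3*(y^2-1)/(y^2+4*y+1)) + ((1+x/2) - (1+x/2)/y) ≤ -x^3/44 := by
    rw [← sub_nonneg]
    have hid : -x^3/44 - (-(3*(y^2-1)/(y^2+4*y+1)) + ((1+x/2) - (1+x/2)/y))
        = (x^3 * (82 + 98*x + 47*x^2 + 7*x^3 - 32*x^4 - 3*x^5 - x^6))
          / (44 * y * (y^2+4*y+1)) := by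
      field_simp
      ring
    rw [hid]
    apply div_nonneg _ (by positivity)
    have h4 : x^4 ≤ 1 := pow_le_one₀ h0 h1
    have h5 : x^5 ≤ 1 := pow_le_one₀ h0 h1
    have h6 : x^6 ≤ 1 := pow_le_one₀ h0 h1
    have h2 : (0:ℝ) ≤ x^2 := sq_nonneg x
    have h3 : (0:ℝ) ≤ x^3 := by positivity
    have : (0:ℝ) ≤ 82 + 98*x + 47*x^2 + 7*x^3 - 32*x^4 - 3*x^5 - x^6 := by linarith
    positivity
  linarith

lemma fbound_flat {s b : ℝ} (hs : 3 ≤ s) (hb : b ≤ 3/2) :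
    -Real.log s + b - b/s ≤ -1/11 := by
  have hs0 : (0:ℝ) < s := by linarith
  have hden : (0:ℝ) < s^2+4*s+1 := by nlinarith
  have hlog := pade_log (show (1:ℝ) ≤ s by linarith)
  have hb' : b - b/s ≤ 3/2 - (3/2)/s := by
    have h1s : 1/s ≤ 1 := by rw [div_le_one hs0]; linarith
    have := mul_le_mul_of_nonneg_right hb (by linarith : (0:ℝ) ≤ 1 - 1/s)
    calc b - b/s = b * (1 - 1/s) := by field_simp
      _ ≤ (3/2) * (1 - 1/s) := this
      _ = 3/2 - (3/2)/s := by field_simp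
  have key : -(3*(s^2-1)/(s^2+4*s+1)) + 3/2 - (3/2)/s ≤ -1/11 := by
    rw [← sub_nonneg]
    have hid : -1/11 - (-(3*(s^2-1)/(s^2+4*s+1)) + 3/2 - (3/2)/s)
        = ((s-3)*(31*s^2-14*s-11)) / (22 * s * (s^2+4*s+1)) := by
      field_simp
      ring
    rw [hid]
    apply div_nonneg _ (by positivity)
    have h1 : (0:ℝ) ≤ s - 3 := by linarith
    have h2 : (0:ℝ) ≤ 31*s^2-14*s-11 := by nlinarith
    positivity
  linarith

lemma ReG_formula (t : ℝ) (ξ : ℂ) :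
    ReG t ξ = t * (-Real.log (Complex.normSq ξ) + ξ.im - ξ.im / Complex.normSq ξ) := by
  rw [ReG, Complex.add_im, Complex.inv_im, Complex.norm_def,
    Real.log_sqrt (Complex.normSq_nonneg ξ)]
  ring

lemma ReH_conj (t : ℝ) (ξ : ℂ) : ReH t ((starRingEnd ℂ) ξ) = -ReG t ξ := by
  rw [ReH, ReG, ← map_inv₀, ← map_add, Complex.conj_im, Complex.norm_conj]
  ring

lemma exp_pi6 : Complex.exp (Complex.I * ((Real.pi : ℂ) / 6))
    = (Complex.ofReal (Real.sqrt 3 / 2)) + (Complex.ofReal (1/2)) * Complex.I := by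
  rw [mul_comm, show ((Real.pi : ℂ)/6) = ((Real.pi/6 : ℝ) : ℂ) by push_cast; ring,
    Complex.exp_mul_I, ← Complex.ofReal_cos, ← Complex.ofReal_sin,
    Real.cos_pi_div_six, Real.sin_pi_div_six]

lemma exp_5pi6 : Complex.exp (Complex.I * (5 * (Real.pi : ℂ) / 6))
    = (Complex.ofReal (-(Real.sqrt 3 / 2))) + (Complex.ofReal (1/2)) * Complex.I := by
  rw [mul_comm, show (5 * (Real.pi : ℂ)/6) = ((5 * Real.pi/6 : ℝ) : ℂ) by push_cast; ring,
    Complex.exp_mul_I, ← Complex.ofReal_cos, ← Complex.ofReal_sin,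
    show (5 * Real.pi/6 : ℝ) = Real.pi - Real.pi/6 by ring,
    Real.cos_pi_sub, Real.sin_pi_sub, Real.cos_pi_div_six, Real.sin_pi_div_six]

lemma abs_exp_pi6 : ‖Complex.exp (Complex.I * ((Real.pi : ℂ) / 6))‖ = 1 := by
  rw [show Complex.I * ((Real.pi : ℂ)/6) = ((Real.pi/6 : ℝ) : ℂ) * Complex.I by push_cast; ring]
  exact Complex.norm_exp_ofReal_mul_I _

lemma abs_exp_5pi6 : ‖Complex.exp (Complex.I * (5 * (Real.pi : ℂ) / 6))‖ = 1 := by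
  rw [show Complex.I * (5 * (Real.pi : ℂ)/6) = ((5 * Real.pi/6 : ℝ) : ℂ) * Complex.I by
    push_cast; ring]
  exact Complex.norm_exp_ofReal_mul_I _

lemma ray_bound {t x : ℝ} (ht : 0 ≤ t) (h0 : 0 ≤ x) (h1 : x ≤ 1) {ξ : ℂ}
    (hre2 : ξ.re^2 = 3*x^2/4) (him : ξ.im = 1 + x/2) :
    ReG t ξ ≤ t * (-x^3/44) := by
  have hs : Complex.normSq ξ = 1+x+x^2 := by
    rw [Complex.normSq_apply, him]
    linear_combination hre2
  rw [ReG_formula, hs, him]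
  exact mul_le_mul_of_nonneg_left (by linarith [fbound_ray h0 h1]) ht

lemma flat_bound {t : ℝ} (ht : 0 ≤ t) {ξ : ℂ}
    (hs3 : 3 ≤ Complex.normSq ξ) (him : ξ.im ≤ 3/2) :
    ReG t ξ ≤ t * (-1/11) := by
  rw [ReG_formula]
  exact mul_le_mul_of_nonneg_left (fbound_flat hs3 him) ht

lemma rpow_step {α t x : ℝ} (ht : 0 < t) (hx : t^(-α) ≤ x) :
    t^(1-3*α) ≤ t * x^3 := by
  have h1 : (0:ℝ) < t ^ (-α) := Real.rpow_pos_of_pos ht _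
  have h2 : (t^(-α))^(3:ℕ) ≤ x^(3:ℕ) := pow_le_pow_left₀ h1.le hx 3
  have h3 : (t^(-α))^(3:ℕ) = t^(-(3*α)) := by
    rw [← Real.rpow_natCast (t^(-α)) 3, ← Real.rpow_mul ht.le]
    norm_num
    ring_nf
  have h4 : t^(1-3*α) = t * t^(-(3*α)) := by
    rw [show (1:ℝ)-3*α = 1 + -(3*α) by ring, Real.rpow_add ht, Real.rpow_one]
  rw [h4]
  rw [h3] at h2
  exact mul_le_mul_of_nonneg_left h2 ht.le

lemma ray_conclude {α t x : ℝ} (ht : 1 ≤ t) (hx : t^(-α) ≤ x) (h1 : x ≤ 1)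
    {ξ : ℂ} (hre2 : ξ.re^2 = 3*x^2/4) (him : ξ.im = 1 + x/2) :
    ReG t ξ < -(1/100) * t^(1-3*α) := by
  have ht0 : (0:ℝ) < t := by linarith
  have h0 : 0 ≤ x := le_trans (Real.rpow_pos_of_pos ht0 _).le hx
  have hb := ray_bound ht0.le h0 h1 hre2 him
  have hs := rpow_step ht0 hx
  have htp : (0:ℝ) < t^(1-3*α) := Real.rpow_pos_of_pos ht0 _
  nlinarith

lemma flat_conclude {α t : ℝ} (hα0 : 0 ≤ α) (ht : 1 ≤ t) {ξ : ℂ}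
    (hs3 : 3 ≤ Complex.normSq ξ) (him : ξ.im ≤ 3/2) :
    ReG t ξ < -(1/100) * t^(1-3*α) := by
  have ht0 : (0:ℝ) < t := by linarith
  have htp : (0:ℝ) < t^(1-3*α) := Real.rpow_pos_of_pos ht0 _
  have hle : t^(1-3*α) ≤ t := by
    calc t^(1-3*α) ≤ t^(1:ℝ) := Real.rpow_le_rpow_of_exponent_le ht (by linarith)
      _ = t := Real.rpow_one t
  have hb := flat_bound ht0.le hs3 him
  nlinarith

lemma sqrt3_sq : Real.sqrt 3 ^ 2 = 3 := Real.sq_sqrt (by norm_num)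

lemma keyG {R α t : ℝ} (hR : Real.sqrt 3 < R) (hα0 : 0 ≤ α) (ht : 1 ≤ t)
    {ξ : ℂ} (hξ : ξ ∈ GammaPlus R) (hd : t ^ (-α) ≤ ‖ξ - Complex.I‖) :
    ReG t ξ < -(1/100) * t ^ (1 - 3*α) := by
  have ht0 : (0:ℝ) < t := by linarith
  have h3 := sqrt3_sq
  have h3n := Real.sqrt_nonneg 3
  rcases hξ with ((((⟨⟨x,hx0,hxe⟩,hball⟩|⟨⟨x,hx0,hxe⟩,hball⟩)|⟨⟨⟨x,hx0,hxe⟩,-⟩,-⟩)|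
    ⟨⟨⟨x,hx0,hxe⟩,-⟩,-⟩)|⟨habs,him⟩)
  · -- piece 1
    have habs : ‖ξ - Complex.I‖ = x := by
      rw [show ξ - Complex.I = (x:ℂ) * Complex.exp (Complex.I * ((Real.pi : ℂ)/6)) by
        rw [hxe]; ring, norm_mul, Complex.norm_real, Real.norm_eq_abs, abs_exp_pi6, abs_of_nonneg hx0, mul_one]
    have h1 : x ≤ 1 := by
      rw [Metric.mem_closedBall, Complex.dist_eq, habs] at hball; exact hball
    refine ray_conclude ht (habs ▸ hd) h1 ?_ ?_
    · rw [hxe, exp_pi6]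
      simp [Complex.add_re, Complex.mul_re]
      linear_combination (x^2/4) * h3
    · rw [hxe, exp_pi6]
      simp [Complex.add_im, Complex.mul_im]
      ring
  · -- piece 2
    have habs : ‖ξ - Complex.I‖ = x := by
      rw [show ξ - Complex.I = (x:ℂ) * Complex.exp (Complex.I * (5*(Real.pi : ℂ)/6)) by
        rw [hxe]; ring, norm_mul, Complex.norm_real, Real.norm_eq_abs, abs_exp_5pi6, abs_of_nonneg hx0, mul_one]
    have h1 : x ≤ 1 := by
      rw [Metric.mem_closedBall, Complex.dist_eq, habs] at hball; exact hball
    refine ray_conclude ht (habs ▸ hd) h1 ?_ ?_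
    · rw [hxe, exp_5pi6]
      simp [Complex.add_re, Complex.mul_re]
      linear_combination (x^2/4) * h3
    · rw [hxe, exp_5pi6]
      simp [Complex.add_im, Complex.mul_im]
      ring
  · -- piece 3
    refine flat_conclude hα0 ht ?_ ?_
    · rw [Complex.normSq_apply, hxe, exp_pi6]
      simp [Complex.add_re, Complex.add_im]
      nlinarith
    · rw [hxe, exp_pi6]
      simp [Complex.add_im]
      norm_num
  · -- piece 4
    refine flat_conclude hα0 ht ?_ ?_
    · rw [Complex.normSq_apply, hxe, exp_5pi6]
      simp [Complex.add_re, Complex.add_im, Complex.sub_re, Complex.sub_im]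
      nlinarith
    · rw [hxe, exp_5pi6]
      simp [Complex.add_im, Complex.sub_im]
      norm_num
  · -- piece 5
    refine flat_conclude hα0 ht ?_ him
    rw [Complex.normSq_eq_norm_sq, habs]
    nlinarith

theorem stmt15 (α : ℝ) (hα1 : 1 / 4 < α) (hα2 : α < 1 / 3) (Rp Rm : ℝ)
    (hRp : Real.sqrt 3 < Rp) (hRm : Real.sqrt 3 < Rm) :
    ∃ c > (0 : ℝ), ∃ t₀ > (0 : ℝ), ∀ t : ℝ, t₀ ≤ t →
      (∀ ξ ∈ GammaPlus Rp, t ^ (-α) ≤ ‖ξ - Complex.I‖ →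
        ReG t ξ < -c * t ^ (1 - 3 * α)) ∧
      (∀ ζ ∈ GammaMinus Rm, t ^ (-α) ≤ ‖ζ + Complex.I‖ →
        c * t ^ (1 - 3 * α) < ReH t ζ) := by
  have hα0 : (0:ℝ) ≤ α := by linarith
  refine ⟨1/100, by norm_num, 1, by norm_num, fun t ht => ⟨fun ξ hξ hd => ?_, fun ζ hζ hd => ?_⟩⟩
  · have := keyG hRp hα0 ht hξ hd
    linarith
  · obtain ⟨ξ, hξ, rfl⟩ := hζ
    have habs : ‖(starRingEnd ℂ) ξ + Complex.I‖ = ‖ξ - Complex.I‖ := by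
      rw [show (starRingEnd ℂ) ξ + Complex.I = (starRingEnd ℂ) (ξ - Complex.I) by
        rw [map_sub, Complex.conj_I]; ring, Complex.norm_conj]
    rw [habs] at hd
    have := keyG hRm hα0 ht hξ hd
    rw [ReH_conj]
    linarith
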